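/- arXiv:math/0208247 — 2 statements merged into one kernel-verified Lean document; each statement's English description precedes it below -/
import Mathlib

section
/- Let (P,⋆,≺) be a polynomial algebra of solvable type over an integral domain R. Then P is an integral domain: for f, g ∈ P nonzero, f ⋆ g ≠ 0. Moreover P satisfies the left Ore condition: for any nonzero f, g ∈ P there exist nonzero φ, ψ ∈ P with φ ⋆ f = ψ ⋆ g. -/
/-- Polynomials in `n` variables over `R`, represented by their coefficient families
indexed by multi indices. -/
abbrev SPoly (R : Type) [CommRing R] (n : ℕ) := (Fin n → ℕ) →₀ R

/-- The leading exponent of a polynomial with respect to a term order (the maximal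
element of its support; `0` for the zero polynomial). -/
noncomputable def lexp {R : Type} [CommRing R] {n : ℕ} (ord : LinearOrder (Fin n → ℕ))
    (f : SPoly R n) : Fin n → ℕ :=
  (@Finset.max _ ord f.support).unbotD 0

/-- A polynomial algebra of solvable type `(P, ⋆, ≺)`: the `R`-module `R[x₁,…,xₙ]`
equipped with an associative unital multiplication `⋆` such that `r ⋆ f = r • f` for
scalars, and with respect to a term order `≺` (a monoid order) the leading exponent of
`x^μ ⋆ x^ν` is `μ + ν` and of `x^μ ⋆ r` (for `r ≠ 0`) is `μ`. -/
structure SolvMul (R : Type) [CommRing R] (n : ℕ) (ord : LinearOrder (Fin n → ℕ)) where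
  star : SPoly R n → SPoly R n → SPoly R n
  zero_min : ∀ μ : Fin n → ℕ, ord.le 0 μ
  add_compat : ∀ μ ν σ : Fin n → ℕ, ord.lt μ ν → ord.lt (μ + σ) (ν + σ)
  star_assoc : ∀ f g h : SPoly R n, star (star f g) h = star f (star g h)
  star_add : ∀ f g h : SPoly R n, star f (g + h) = star f g + star f h
  add_star : ∀ f g h : SPoly R n, star (f + g) h = star f h + star g h
  one_star : ∀ f : SPoly R n, star (Finsupp.single 0 1) f = f
  star_one : ∀ f : SPoly R n, star f (Finsupp.single 0 1) = f
  scalar_star : ∀ (r : R) (f : SPoly R n), star (Finsupp.single 0 r) f = r • f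
  mono_mono : ∀ μ ν : Fin n → ℕ,
    star (Finsupp.single μ 1) (Finsupp.single ν 1) ≠ 0 ∧
      lexp ord (star (Finsupp.single μ 1) (Finsupp.single ν 1)) = μ + ν
  mono_scalar : ∀ (μ : Fin n → ℕ) (r : R), r ≠ 0 →
    star (Finsupp.single μ 1) (Finsupp.single 0 r) ≠ 0 ∧
      lexp ord (star (Finsupp.single μ 1) (Finsupp.single 0 r)) = μ

namespace Stmt13Aux
set_option linter.unusedSectionVars false

variable {R : Type} [CommRing R] [IsDomain R] {n : ℕ}
variable {ord : LinearOrder (Fin n → ℕ)}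

/-! ### lexp basics -/

theorem lexp_mem {f : SPoly R n} (hf : f ≠ 0) : lexp ord f ∈ f.support := by
  have hs : f.support.Nonempty := Finsupp.support_nonempty_iff.mpr hf
  have h1 := @Finset.max'_mem _ ord f.support hs
  have h2 : (@Finset.max _ ord f.support) = ((@Finset.max' _ ord f.support hs : Fin n → ℕ) :
      WithBot (Fin n → ℕ)) := (@Finset.coe_max' _ ord _ hs).symm
  rw [lexp, h2, WithBot.unbotD_coe]
  exact h1

theorem le_lexp {f : SPoly R n} {μ : Fin n → ℕ} (hμ : μ ∈ f.support) :
    ord.le μ (lexp ord f) := by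
  have hf : f ≠ 0 := by
    intro h; rw [h] at hμ; simp at hμ
  have hs : f.support.Nonempty := ⟨μ, hμ⟩
  have h1 := @Finset.le_max' _ ord f.support μ hμ
  have h2 : (@Finset.max _ ord f.support) = ((@Finset.max' _ ord f.support hs : Fin n → ℕ) :
      WithBot (Fin n → ℕ)) := (@Finset.coe_max' _ ord _ hs).symm
  rw [lexp, h2, WithBot.unbotD_coe]
  exact h1

theorem coeff_lexp_ne {f : SPoly R n} (hf : f ≠ 0) : f (lexp ord f) ≠ 0 :=
  Finsupp.mem_support_iff.mp (lexp_mem hf)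

theorem coeff_eq_zero_of_lexp_lt {f : SPoly R n} {μ : Fin n → ℕ}
    (h : ord.lt (lexp ord f) μ) : f μ = 0 := by
  by_contra hc
  have := le_lexp (f := f) (μ := μ) (Finsupp.mem_support_iff.mpr hc)
  rcases (@lt_iff_le_not_ge _ ord.toPreorder _ _).mp h with ⟨-, hn⟩
  exact hn this

theorem lexp_eq_of {f : SPoly R n} {γ : Fin n → ℕ} (h0 : f γ ≠ 0)
    (hb : ∀ μ ∈ f.support, ord.le μ γ) : lexp ord f = γ := by
  have hf : f ≠ 0 := fun h => h0 (by rw [h]; rfl)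
  exact ord.le_antisymm _ _ (hb _ (lexp_mem hf)) (le_lexp (Finsupp.mem_support_iff.mpr h0))

/-! ### order basics -/

section Ord
variable (A : SolvMul R n ord)
include A

theorem ole_add_right {μ ν : Fin n → ℕ} (h : ord.le μ ν) (σ : Fin n → ℕ) :
    ord.le (μ + σ) (ν + σ) := by
  rcases (@lt_or_eq_of_le _ ord.toPartialOrder _ _ h) with h' | h'
  · exact @le_of_lt _ ord.toPreorder _ _ (A.add_compat _ _ σ h')
  · subst h'; exact @le_refl _ ord.toPreorder _

theorem ole_add_left {μ ν : Fin n → ℕ} (h : ord.le μ ν) (σ : Fin n → ℕ) :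
    ord.le (σ + μ) (σ + ν) := by
  have := ole_add_right A h σ
  rwa [add_comm μ σ, add_comm ν σ] at this

theorem ole_add_add {μ ν σ τ : Fin n → ℕ} (h1 : ord.le μ ν) (h2 : ord.le σ τ) :
    ord.le (μ + σ) (ν + τ) :=
  @le_trans _ ord.toPreorder _ _ _ (ole_add_right A h1 σ) (ole_add_left A h2 ν)

theorem olt_add_add {μ ν σ τ : Fin n → ℕ} (h1 : ord.le μ ν) (h2 : ord.lt σ τ) :
    ord.lt (μ + σ) (ν + τ) := by
  have hl : ord.lt (μ + σ) (μ + τ) := by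
    have := A.add_compat σ τ μ h2
    rwa [add_comm σ μ, add_comm τ μ] at this
  exact @lt_of_lt_of_le _ ord.toPreorder _ _ _ hl (ole_add_right A h1 τ)


theorem pile_ole {μ ν : Fin n → ℕ} (h : ∀ i, μ i ≤ ν i) : ord.le μ ν := by
  have key : ord.le (0 + μ) ((ν - μ) + μ) := ole_add_right A (A.zero_min (ν - μ)) μ
  have h1 : (0 : Fin n → ℕ) + μ = μ := by funext i; simp
  have h2 : (ν - μ) + μ = ν := by funext i; simp only [Pi.add_apply, Pi.sub_apply];
                                  exact Nat.sub_add_cancel (h i)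
  rwa [h1, h2] at key

theorem ord_wf : WellFounded ord.lt := by
  rw [RelEmbedding.wellFounded_iff_isEmpty]
  constructor
  intro e
  have hp : (Set.univ : Set (Fin n → ℕ)).IsPWO :=
    Set.isPWO_of_wellQuasiOrderedLE _
  obtain ⟨i, j, hij, hle⟩ := Set.PartiallyWellOrderedOn.exists_lt hp (f := fun k => e k) (fun k => Set.mem_univ _)
  have h1 : ord.lt (e j) (e i) := e.map_rel_iff.mpr hij
  have h2 : ord.le (e i) (e j) := pile_ole A (fun k => hle k)
  exact ((@lt_iff_le_not_ge _ ord.toPreorder _ _).mp h1).2 h2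

theorem olt_add_add' {μ ν σ τ : Fin n → ℕ} (h1 : ord.lt μ ν) (h2 : ord.le σ τ) :
    ord.lt (μ + σ) (ν + τ) :=
  @lt_of_lt_of_le _ ord.toPreorder _ _ _ (A.add_compat _ _ σ h1) (ole_add_left A h2 ν)

end Ord

section StarAlg
variable (A : SolvMul R n ord)

theorem star_zero (f : SPoly R n) : A.star f 0 = 0 := by
  have h := A.star_add f 0 0
  rw [add_zero] at h
  nth_rewrite 1 [← add_zero (A.star f 0)] at h
  exact (add_left_cancel h).symm

theorem zero_star (g : SPoly R n) : A.star 0 g = 0 := by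
  have h := A.add_star 0 0 g
  rw [add_zero] at h
  nth_rewrite 1 [← add_zero (A.star 0 g)] at h
  exact (add_left_cancel h).symm

theorem smul_star (r : R) (f g : SPoly R n) : A.star (r • f) g = r • A.star f g := by
  rw [← A.scalar_star r f, A.star_assoc, A.scalar_star]

/-- Right multiplication as a linear map. -/
def starL (g : SPoly R n) : SPoly R n →ₗ[R] SPoly R n where
  toFun φ := A.star φ g
  map_add' a b := A.add_star a b g
  map_smul' r x := by simp only [RingHom.id_apply]; exact smul_star A r x g

/-- Left multiplication as an additive map. -/
noncomputable def starR (f : SPoly R n) : SPoly R n →+ SPoly R n :=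
  AddMonoidHom.mk' (A.star f) (A.star_add f)

theorem single_star (σ : Fin n → ℕ) (c : R) (g : SPoly R n) :
    A.star (Finsupp.single σ c) g = c • A.star (Finsupp.single σ 1) g := by
  rw [← smul_star]
  congr 1
  rw [Finsupp.smul_single', mul_one]

theorem left_decomp (f g : SPoly R n) :
    A.star f g = ∑ σ ∈ f.support, A.star (Finsupp.single σ (f σ)) g := by
  conv_lhs => rw [← Finsupp.sum_single f]
  rw [Finsupp.sum]
  exact map_sum (starL A g) (fun σ => Finsupp.single σ (f σ)) f.support

theorem right_decomp (f g : SPoly R n) :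
    A.star f g = ∑ τ ∈ g.support, A.star f (Finsupp.single τ (g τ)) := by
  conv_lhs => rw [← Finsupp.sum_single g]
  rw [Finsupp.sum]
  exact map_sum (starR A f) (fun τ => Finsupp.single τ (g τ)) g.support

theorem star_single_single {σ τ : Fin n → ℕ} {c d : R} (hc : c ≠ 0) (hd : d ≠ 0) :
    A.star (Finsupp.single σ c) (Finsupp.single τ d) ≠ 0 ∧
      lexp ord (A.star (Finsupp.single σ c) (Finsupp.single τ d)) = σ + τ := by
  obtain ⟨hp0, hpl⟩ := A.mono_scalar σ d hd
  set p := A.star (Finsupp.single σ 1) (Finsupp.single 0 d) with hp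
  set m : (Fin n → ℕ) → SPoly R n :=
    fun ρ => A.star (Finsupp.single ρ 1) (Finsupp.single τ 1) with hm
  set q := A.star p (Finsupp.single τ 1) with hq
  have hqeq : A.star (Finsupp.single σ 1) (Finsupp.single τ d) = q := by
    rw [hq, hp, A.star_assoc]
    congr 1
    rw [A.scalar_star, Finsupp.smul_single', mul_one]
  have hqd : q = ∑ ρ ∈ p.support, (p ρ) • m ρ := by
    rw [hq, left_decomp]
    exact Finset.sum_congr rfl fun ρ _ => single_star A ρ (p ρ) _
  have hql : ∀ μ ∈ q.support, ord.le μ (σ + τ) := by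
    intro μ hμ
    rw [hqd] at hμ
    obtain ⟨ρ, hρ, hμρ⟩ := Finset.mem_biUnion.mp (Finsupp.support_finset_sum hμ)
    have h1 : μ ∈ (m ρ).support := Finsupp.support_smul hμρ
    have h2 : ord.le μ (ρ + τ) := (A.mono_mono ρ τ).2 ▸ le_lexp h1
    have h3 : ord.le ρ σ := hpl ▸ le_lexp hρ
    exact @le_trans _ ord.toPreorder _ _ _ h2 (ole_add_right A h3 τ)
  have hqc : q (σ + τ) = p σ * (m σ) (σ + τ) := by
    rw [hqd, Finsupp.finset_sum_apply]
    rw [Finset.sum_eq_single σ]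
    · rw [Finsupp.smul_apply, smul_eq_mul]
    · intro b hb hbne
      have h3 : ord.le b σ := hpl ▸ le_lexp hb
      have h4 : ord.lt b σ := @lt_of_le_of_ne _ ord.toPartialOrder _ _ h3 hbne
      have h5 : ord.lt (lexp ord (m b)) (σ + τ) :=
        (A.mono_mono b τ).2.symm ▸ A.add_compat b σ τ h4
      rw [Finsupp.smul_apply, coeff_eq_zero_of_lexp_lt h5, smul_zero]
    · intro hσ
      exact absurd (hpl ▸ lexp_mem hp0) hσ
  have hqc0 : q (σ + τ) ≠ 0 := by
    rw [hqc]
    exact mul_ne_zero (hpl ▸ coeff_lexp_ne hp0)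
      ((A.mono_mono σ τ).2 ▸ coeff_lexp_ne (A.mono_mono σ τ).1)
  have hfull : A.star (Finsupp.single σ c) (Finsupp.single τ d) = c • q := by
    rw [single_star, hqeq]
  have hcoeff : (A.star (Finsupp.single σ c) (Finsupp.single τ d)) (σ + τ) ≠ 0 := by
    rw [hfull, Finsupp.smul_apply, smul_eq_mul]
    exact mul_ne_zero hc hqc0
  refine ⟨fun h => hcoeff (by rw [h]; rfl), lexp_eq_of hcoeff ?_⟩
  intro μ hμ
  rw [hfull] at hμ
  exact hql μ (Finsupp.support_smul hμ)


theorem star_main (A : SolvMul R n ord) {f g : SPoly R n} (hf : f ≠ 0) (hg : g ≠ 0) :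
    A.star f g ≠ 0 ∧ lexp ord (A.star f g) = lexp ord f + lexp ord g := by
  set d := lexp ord f with hd
  set e := lexp ord g with he
  set T : (Fin n → ℕ) → (Fin n → ℕ) → SPoly R n :=
    fun σ τ => A.star (Finsupp.single σ (f σ)) (Finsupp.single τ (g τ)) with hT
  have hdec : A.star f g = ∑ σ ∈ f.support, ∑ τ ∈ g.support, T σ τ := by
    rw [left_decomp]
    exact Finset.sum_congr rfl fun σ _ => right_decomp A _ g
  have hTs : ∀ σ ∈ f.support, ∀ τ ∈ g.support, T σ τ ≠ 0 ∧ lexp ord (T σ τ) = σ + τ :=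
    fun σ hσ τ hτ =>
      star_single_single A (Finsupp.mem_support_iff.mp hσ) (Finsupp.mem_support_iff.mp hτ)
  have hde : d ∈ f.support := lexp_mem hf
  have hee : e ∈ g.support := lexp_mem hg
  have hcoeff : (A.star f g) (d + e) = (T d e) (d + e) := by
    rw [hdec, Finsupp.finset_sum_apply]
    rw [Finset.sum_eq_single d]
    · rw [Finsupp.finset_sum_apply]
      rw [Finset.sum_eq_single e]
      · intro b hb hbne
        have h4 : ord.lt b e := @lt_of_le_of_ne _ ord.toPartialOrder _ _ (le_lexp hb) hbne
        have h5 : ord.lt (lexp ord (T d b)) (d + e) :=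
          (hTs d hde b hb).2.symm ▸ olt_add_add A (@le_refl _ ord.toPreorder d) h4
        exact coeff_eq_zero_of_lexp_lt h5
      · intro hc; exact absurd hee hc
    · intro b hb hbne
      have h4 : ord.lt b d := @lt_of_le_of_ne _ ord.toPartialOrder _ _ (le_lexp hb) hbne
      rw [Finsupp.finset_sum_apply]
      apply Finset.sum_eq_zero
      intro τ hτ
      have h5 : ord.lt (lexp ord (T b τ)) (d + e) :=
        (hTs b hb τ hτ).2.symm ▸ olt_add_add' A h4 (le_lexp hτ)
      exact coeff_eq_zero_of_lexp_lt h5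
    · intro hc; exact absurd hde hc
  have hc0 : (A.star f g) (d + e) ≠ 0 := by
    rw [hcoeff, (hTs d hde e hee).2.symm]
    exact coeff_lexp_ne (hTs d hde e hee).1
  have hsupp : ∀ μ ∈ (A.star f g).support, ord.le μ (d + e) := by
    intro μ hμ
    rw [hdec] at hμ
    obtain ⟨σ, hσ, hμσ⟩ := Finset.mem_biUnion.mp (Finsupp.support_finset_sum hμ)
    obtain ⟨τ, hτ, hμτ⟩ := Finset.mem_biUnion.mp (Finsupp.support_finset_sum hμσ)
    have h1 : ord.le μ (σ + τ) := (hTs σ hσ τ hτ).2 ▸ le_lexp hμτ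
    exact @le_trans _ ord.toPreorder _ _ _ h1 (ole_add_add A (le_lexp hσ) (le_lexp hτ))
  exact ⟨fun h => hc0 (by rw [h]; rfl), lexp_eq_of hc0 hsupp⟩

theorem star_ne_zero (A : SolvMul R n ord) {f g : SPoly R n} (hf : f ≠ 0) (hg : g ≠ 0) :
    A.star f g ≠ 0 := (star_main A hf hg).1

theorem eq_zero_of_star_left (A : SolvMul R n ord) {f g : SPoly R n} (hg : g ≠ 0)
    (h : A.star f g = 0) : f = 0 := by
  by_contra hf
  exact star_ne_zero A hf hg h

theorem smul_ne_zero' {r : R} {w : SPoly R n} (hr : r ≠ 0) (hw : w ≠ 0) : r • w ≠ 0 := by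
  intro h
  apply hw
  ext μ
  have := congrArg (fun z : SPoly R n => z μ) h
  simp only [Finsupp.smul_apply, smul_eq_mul, Finsupp.coe_zero, Pi.zero_apply] at this ⊢
  rcases mul_eq_zero.mp this with h' | h'
  · exact absurd h' hr
  · exact h'

theorem lexp_smul {r : R} {w : SPoly R n} (hr : r ≠ 0) : lexp ord (r • w) = lexp ord w := by
  unfold lexp
  rw [Finsupp.support_smul_eq hr]

end StarAlg

theorem lexp_single {σ : Fin n → ℕ} {c : R} (hc : c ≠ 0) :
    lexp ord (Finsupp.single σ c) = σ := by
  apply lexp_eq_of (by rwa [Finsupp.single_eq_same])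
  intro μ hμ
  have := Finsupp.support_single_subset hμ
  simp only [Finset.mem_singleton] at this
  subst this
  exact @le_refl _ ord.toPreorder _

section Ore
variable (A : SolvMul R n ord) (f g : SPoly R n)

theorem star_sum {ι : Type} (s : Finset ι) (φ : ι → SPoly R n) (h : SPoly R n) :
    A.star (∑ i ∈ s, φ i) h = ∑ i ∈ s, A.star (φ i) h :=
  map_sum (starL A h) φ s

theorem sum_star {ι : Type} (s : Finset ι) (φ : ι → SPoly R n) (h : SPoly R n) :
    A.star h (∑ i ∈ s, φ i) = ∑ i ∈ s, A.star h (φ i) :=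
  map_sum (starR A h) φ s

theorem star_neg (φ h : SPoly R n) : A.star (-φ) h = -(A.star φ h) :=
  map_neg (starL A h) φ

/-- `hseq k = f ⋆ g^k`. -/
def hseq : ℕ → SPoly R n
  | 0 => f
  | k+1 => A.star (hseq k) g

theorem hseq_ne (hf : f ≠ 0) (hg : g ≠ 0) : ∀ k, hseq A f g k ≠ 0
  | 0 => hf
  | k+1 => star_ne_zero A (hseq_ne hf hg k) hg

theorem indep (hf : f ≠ 0) (hg : g ≠ 0)
    (H : ∀ φ ψ : SPoly R n, A.star φ f = A.star ψ g → φ = 0) :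
    ∀ k (c : ℕ → SPoly R n),
      (∑ i ∈ Finset.range (k+1), A.star (c i) (hseq A f g i)) = 0 → ∀ i ≤ k, c i = 0 := by
  intro k
  induction k with
  | zero =>
    intro c hc i hi
    interval_cases i
    rw [Finset.range_one, Finset.sum_singleton] at hc
    exact eq_zero_of_star_left A hf hc
  | succ k ih =>
    intro c hc i hi
    rw [Finset.sum_range_succ'] at hc
    set Ψ := ∑ i ∈ Finset.range (k+1), A.star (c (i+1)) (hseq A f g i) with hΨ
    have h2 : A.star Ψ g =
        ∑ i ∈ Finset.range (k+1), A.star (c (i+1)) (hseq A f g (i+1)) := by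
      rw [hΨ, star_sum]
      exact Finset.sum_congr rfl fun j _ => by
        show A.star (A.star (c (j+1)) (hseq A f g j)) g = _
        rw [A.star_assoc]
        rfl
    have h3 : A.star (c 0) f = A.star (-Ψ) g := by
      rw [star_neg, h2]
      have hff : hseq A f g 0 = f := rfl
      rw [hff] at hc
      exact eq_neg_of_add_eq_zero_right hc
    have hc0 : c 0 = 0 := H _ _ h3
    have h4 : A.star Ψ g = 0 := by
      rw [hc0, zero_star] at hc
      rw [h2]
      simpa using hc
    have hΨ0 : Ψ = 0 := eq_zero_of_star_left A hg h4
    rcases Nat.eq_zero_or_eq_succ_pred i with h | h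
    · rw [h]; exact hc0
    · rw [h]
      exact ih (fun j => c (j+1)) hΨ0 (i-1) (by omega)

/-- Saturated membership in the module generated by `hseq 0, …, hseq k`. -/
def InS (k : ℕ) (w : SPoly R n) : Prop :=
  ∃ r : R, r ≠ 0 ∧ ∃ c : ℕ → SPoly R n,
    r • w = ∑ i ∈ Finset.range (k+1), A.star (c i) (hseq A f g i)

theorem InS_zero (k : ℕ) : InS A f g k 0 :=
  ⟨1, one_ne_zero, fun _ => 0, by
    rw [smul_zero]
    symm
    apply Finset.sum_eq_zero
    intro i _
    exact zero_star A _⟩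

theorem InS_mono {k k' : ℕ} (hkk : k ≤ k') {w : SPoly R n} (h : InS A f g k w) :
    InS A f g k' w := by
  obtain ⟨r, hr, c, hc⟩ := h
  refine ⟨r, hr, fun i => if i ∈ Finset.range (k+1) then c i else 0, ?_⟩
  rw [hc]
  have e1 : ∑ i ∈ Finset.range (k+1), A.star (c i) (hseq A f g i)
      = ∑ i ∈ Finset.range (k+1),
          A.star (if i ∈ Finset.range (k+1) then c i else 0) (hseq A f g i) :=
    Finset.sum_congr rfl fun i hi => by rw [if_pos hi]
  rw [e1]
  exact Finset.sum_subset (Finset.range_subset_range.mpr (by omega))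
    (fun x hx hx' => by rw [if_neg hx', zero_star])

theorem InS_comb {k : ℕ} {w v : SPoly R n} (a b : R) (hw : InS A f g k w)
    (hv : InS A f g k v) : InS A f g k (a • w + b • v) := by
  obtain ⟨r, hr, c, hc⟩ := hw
  obtain ⟨r', hr', c', hc'⟩ := hv
  refine ⟨r * r', mul_ne_zero hr hr', fun i => (r' * a) • c i + (r * b) • c' i, ?_⟩
  have key : (r * r') • (a • w + b • v) = (r' * a) • (r • w) + (r * b) • (r' • v) := by
    rw [smul_add, smul_smul, smul_smul, smul_smul, smul_smul,
      show r * r' * a = r' * a * r from by ring, show r * r' * b = r * b * r' from by ring]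
  rw [key, hc, hc', Finset.smul_sum, Finset.smul_sum, ← Finset.sum_add_distrib]
  exact Finset.sum_congr rfl fun i _ => by rw [A.add_star, smul_star, smul_star]

theorem InS_absorb {k : ℕ} {w : SPoly R n} {a : R} (ha : a ≠ 0)
    (h : InS A f g k (a • w)) : InS A f g k w := by
  obtain ⟨r, hr, c, hc⟩ := h
  exact ⟨r * a, mul_ne_zero hr ha, c, by rwa [smul_smul] at hc⟩

/-- The set of leading exponents occurring in the saturated module. -/
def InE (k : ℕ) (γ : Fin n → ℕ) : Prop :=
  ∃ w : SPoly R n, InS A f g k w ∧ w ≠ 0 ∧ lexp ord w = γ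

theorem InE_mono {k k' : ℕ} (hkk : k ≤ k') {γ : Fin n → ℕ} (h : InE A f g k γ) :
    InE A f g k' γ := by
  obtain ⟨w, h1, h2, h3⟩ := h
  exact ⟨w, InS_mono A f g hkk h1, h2, h3⟩

theorem single_one_ne (σ : Fin n → ℕ) : (Finsupp.single σ 1 : SPoly R n) ≠ 0 :=
  fun h => one_ne_zero (Finsupp.single_eq_zero.mp h)

theorem InE_upper {k : ℕ} {γ : Fin n → ℕ} (h : InE A f g k γ) (σ : Fin n → ℕ) :
    InE A f g k (γ + σ) := by
  obtain ⟨w, ⟨r, hr, c, hc⟩, hw0, hwl⟩ := h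
  set u := A.star (Finsupp.single σ 1) (r • w) with hu
  have hrw : r • w ≠ 0 := smul_ne_zero' hr hw0
  refine ⟨u, ⟨1, one_ne_zero, fun i => A.star (Finsupp.single σ 1) (c i), ?_⟩, ?_, ?_⟩
  · rw [one_smul, hu, hc, sum_star]
    exact Finset.sum_congr rfl fun i _ => (A.star_assoc _ _ _).symm
  · exact star_ne_zero A (single_one_ne σ) hrw
  · rw [hu, (star_main A (single_one_ne σ) hrw).2,
      lexp_single one_ne_zero, lexp_smul hr, hwl, add_comm]

theorem InS_hseq {k i : ℕ} (hik : i ≤ k) : InS A f g k (hseq A f g i) := by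
  refine ⟨1, one_ne_zero,
    fun j => if j = i then Finsupp.single 0 1 else 0, ?_⟩
  rw [one_smul]
  symm
  rw [Finset.sum_eq_single i]
  · simp [A.one_star]
  · intro b _ hbne
    simp [hbne, zero_star A]
  · intro hi
    exact absurd (Finset.mem_range.mpr (by omega)) hi

theorem hseq_not_InS (hf : f ≠ 0) (hg : g ≠ 0)
    (H : ∀ φ ψ : SPoly R n, A.star φ f = A.star ψ g → φ = 0) (k : ℕ) :
    ¬ InS A f g k (hseq A f g (k+1)) := by
  rintro ⟨r, hr, c, hc⟩
  set c'' : ℕ → SPoly R n :=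
    fun i => if i = k+1 then -(Finsupp.single (0 : Fin n → ℕ) r) else c i with hc''
  have hsum : ∑ i ∈ Finset.range (k+2), A.star (c'' i) (hseq A f g i) = 0 := by
    rw [Finset.sum_range_succ]
    have e1 : ∑ i ∈ Finset.range (k+1), A.star (c'' i) (hseq A f g i)
        = ∑ i ∈ Finset.range (k+1), A.star (c i) (hseq A f g i) :=
      Finset.sum_congr rfl fun i hi => by
        simp [hc'', show i ≠ k+1 from by have := Finset.mem_range.mp hi; omega]
    rw [e1, ← hc]
    simp [hc'', star_neg A, A.scalar_star]
  have h6 := indep A f g hf hg H (k+1) c'' hsum (k+1) le_rfl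
  rw [hc''] at h6
  simp at h6
  exact hr h6

theorem Bsat {k : ℕ}
    (hE : ∀ γ, InE A f g (k+1) γ → InE A f g k γ) :
    ∀ w, InS A f g (k+1) w → InS A f g k w := by
  intro w hw
  refine (ord_wf A).induction
    (C := fun γ => ∀ w, lexp ord w = γ → InS A f g (k+1) w → InS A f g k w)
    (lexp ord w) ?_ w rfl hw
  clear hw w
  intro γ IH w hwγ hw
  by_cases hw0 : w = 0
  · rw [hw0]; exact InS_zero A f g k
  obtain ⟨v, hvS, hv0, hvγ⟩ := hE γ ⟨w, hw, hw0, hwγ⟩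
  have ha : v γ ≠ 0 := by have := coeff_lexp_ne (ord := ord) hv0; rwa [hvγ] at this
  have hb : w γ ≠ 0 := by have := coeff_lexp_ne (ord := ord) hw0; rwa [hwγ] at this
  set w' := (v γ) • w + (-(w γ)) • v with hw'
  have hw'S : InS A f g (k+1) w' :=
    InS_comb A f g _ _ hw (InS_mono A f g (Nat.le_succ k) hvS)
  have habs : InS A f g k w' → InS A f g k w := by
    intro h
    have h2 : (v γ) • w = w' + (w γ) • v := by
      rw [hw', add_assoc, ← add_smul, neg_add_cancel, zero_smul, add_zero]
    have h3 : InS A f g k ((v γ) • w) := by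
      rw [h2]
      have := InS_comb A f g 1 (w γ) h hvS
      simpa using this
    exact InS_absorb A f g ha h3
  by_cases hw'0 : w' = 0
  · apply habs
    rw [hw'0]
    exact InS_zero A f g k
  · have hcoeff : w' γ = 0 := by
      rw [hw', Finsupp.add_apply, Finsupp.smul_apply, Finsupp.smul_apply,
        smul_eq_mul, smul_eq_mul]
      ring
    have hsup : ∀ μ ∈ w'.support, ord.le μ γ := by
      intro μ hμ
      rw [hw'] at hμ
      rcases Finset.mem_union.mp (Finsupp.support_add hμ) with h | h
      · have := le_lexp (Finsupp.support_smul h)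
        rwa [hwγ] at this
      · have := le_lexp (Finsupp.support_smul h)
        rwa [hvγ] at this
    have hlt : ord.lt (lexp ord w') γ := by
      have h1 : ord.le (lexp ord w') γ := hsup _ (lexp_mem hw'0)
      have h2 : lexp ord w' ≠ γ := by
        intro h
        have := coeff_lexp_ne (ord := ord) hw'0
        rw [h] at this
        exact this hcoeff
      exact @lt_of_le_of_ne _ ord.toPartialOrder _ _ h1 h2
    exact habs (IH _ hlt w' rfl hw'S)

theorem strictE (hf : f ≠ 0) (hg : g ≠ 0)
    (H : ∀ φ ψ : SPoly R n, A.star φ f = A.star ψ g → φ = 0) (k : ℕ) :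
    ∃ γ, InE A f g (k+1) γ ∧ ¬ InE A f g k γ := by
  by_contra hcon
  push_neg at hcon
  have hE : ∀ γ, InE A f g (k+1) γ → InE A f g k γ := fun γ h => hcon γ h
  have h1 : InS A f g (k+1) (hseq A f g (k+1)) := InS_hseq A f g le_rfl
  exact hseq_not_InS A f g hf hg H k (Bsat A f g hE _ h1)

theorem ore (hf : f ≠ 0) (hg : g ≠ 0) :
    ∃ φ ψ : SPoly R n, φ ≠ 0 ∧ ψ ≠ 0 ∧ A.star φ f = A.star ψ g := by
  by_contra hcon
  push_neg at hcon
  have H : ∀ φ ψ : SPoly R n, A.star φ f = A.star ψ g → φ = 0 := by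
    intro φ ψ h
    by_contra hφ
    have hψ : ψ ≠ 0 := by
      intro h0
      rw [h0, zero_star] at h
      exact star_ne_zero A hφ hf h
    exact hcon φ ψ hφ hψ h
  choose Γ hΓ1 hΓ2 using strictE A f g hf hg H
  have hp : (Set.univ : Set (Fin n → ℕ)).IsPWO :=
    Set.isPWO_of_wellQuasiOrderedLE _
  obtain ⟨i, j, hij, hle⟩ := Set.PartiallyWellOrderedOn.exists_lt hp (f := Γ) (fun k => Set.mem_univ _)
  have hdec : Γ j = Γ i + (Γ j - Γ i) := by
    funext t
    simp only [Pi.add_apply, Pi.sub_apply]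
    have h9 : Γ i t ≤ Γ j t := hle t
    omega
  have h1 : InE A f g (i+1) (Γ j) := by
    rw [hdec]
    exact InE_upper A f g (hΓ1 i) _
  have h2 : InE A f g j (Γ j) := InE_mono A f g (by omega) h1
  exact hΓ2 j h2

end Ore

end Stmt13Aux

/-- A polynomial algebra of solvable type over an integral domain is an integral
domain (`f ⋆ g ≠ 0` for nonzero `f, g`) and a left Ore domain: for any nonzero
`f, g` there exist nonzero `φ, ψ` with `φ ⋆ f = ψ ⋆ g`. -/
theorem stmt13 {R : Type} [CommRing R] [IsDomain R] {n : ℕ}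
    (ord : LinearOrder (Fin n → ℕ)) (A : SolvMul R n ord) :
    (∀ f g : SPoly R n, f ≠ 0 → g ≠ 0 → A.star f g ≠ 0) ∧
    (∀ f g : SPoly R n, f ≠ 0 → g ≠ 0 →
      ∃ φ ψ : SPoly R n, φ ≠ 0 ∧ ψ ≠ 0 ∧ A.star φ f = A.star ψ g) :=
  ⟨fun _ _ hf hg => Stmt13Aux.star_ne_zero A hf hg,
   fun f g hf hg => Stmt13Aux.ore A f g hf hg⟩
end

section
/- Let (P,⋆,≺) be a polynomial algebra of solvable type over a field k, L an involutive division, I ⊆ P a nonzero left ideal, and ℋ ⊂ I a finite set of nonzero polynomials. Then ℋ is a weak involutive basis of I (i.e., the leading exponents of ℋ form a weak involutive basis of the monoid ideal of leading exponents of I) if and only if every f ∈ I can be written f = Σ_{h∈ℋ} P_h ⋆ h with each P_h a polynomial in the multiplicative variables of h and le(P_h ⋆ h) ⪯ le(f). Furthermore, ℋ is a strong involutive basis if and only if this representation is always unique. -/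
/-- The restricted cone of `ν` determined by a set `N` of multiplicative indices. -/
def rcone {n : ℕ} (N : Set (Fin n)) (ν : Fin n → ℕ) : Set (Fin n → ℕ) :=
  {μ | (∀ i, ν i ≤ μ i) ∧ ∀ i ∉ N, μ i = ν i}

/-- An involutive division on `ℕ^n`. -/
structure InvDiv (n : ℕ) where
  mult : Finset (Fin n → ℕ) → (Fin n → ℕ) → Set (Fin n)
  nested : ∀ (𝒩 : Finset (Fin n → ℕ)), ∀ μ ∈ 𝒩, ∀ ν ∈ 𝒩,
    (rcone (mult 𝒩 μ) μ ∩ rcone (mult 𝒩 ν) ν).Nonempty →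
      rcone (mult 𝒩 μ) μ ⊆ rcone (mult 𝒩 ν) ν ∨
        rcone (mult 𝒩 ν) ν ⊆ rcone (mult 𝒩 μ) μ
  mono : ∀ (𝒩 𝒩' : Finset (Fin n → ℕ)), 𝒩' ⊆ 𝒩 → ∀ ν ∈ 𝒩', mult 𝒩 ν ⊆ mult 𝒩' ν

/-- The set of leading exponents of a finite set of polynomials. -/
noncomputable def leadSet {R : Type} [CommRing R] {n : ℕ} (ord : LinearOrder (Fin n → ℕ))
    (ℋ : Finset (SPoly R n)) : Finset (Fin n → ℕ) :=
  ℋ.image (lexp ord)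

/-- The monoid ideal of leading exponents of (the nonzero elements of) a set of
polynomials. -/
def leadExps {R : Type} [CommRing R] {n : ℕ} (ord : LinearOrder (Fin n → ℕ))
    (I : Set (SPoly R n)) : Set (Fin n → ℕ) :=
  {μ | ∃ f ∈ I, f ≠ 0 ∧ lexp ord f = μ}

/-- `P` gives an involutive standard representation of `f` with respect to `ℋ`:
`f = Σ_{h∈ℋ} P_h ⋆ h`, every `P_h` only involves the multiplicative variables of `h`,
and `le(P_h ⋆ h) ⪯ le(f)`. -/
def IsInvRep {R : Type} [CommRing R] {n : ℕ} (ord : LinearOrder (Fin n → ℕ))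
    (A : SolvMul R n ord) (L : InvDiv n) (ℋ : Finset (SPoly R n)) (f : SPoly R n)
    (P : {h // h ∈ ℋ} → SPoly R n) : Prop :=
  f = ∑ h ∈ ℋ.attach, A.star (P h) h.1 ∧
    ∀ h : {h // h ∈ ℋ},
      (∀ μ ∈ (P h).support, ∀ i ∉ L.mult (leadSet ord ℋ) (lexp ord h.1), μ i = 0) ∧
      ord.le (lexp ord (A.star (P h) h.1)) (lexp ord f)

/-- `ℋ` is a weak involutive basis of the left ideal `I`: `ℋ ⊂ I \ {0}` and the
leading exponents of `ℋ` form a weak involutive basis of the monoid ideal of leading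
exponents of `I`. -/
def WeakInvBasis {R : Type} [CommRing R] {n : ℕ} (ord : LinearOrder (Fin n → ℕ))
    (L : InvDiv n) (I : Set (SPoly R n)) (ℋ : Finset (SPoly R n)) : Prop :=
  (↑ℋ : Set (SPoly R n)) ⊆ I ∧ (0 : SPoly R n) ∉ ℋ ∧
    (⋃ μ ∈ leadSet ord ℋ, rcone (L.mult (leadSet ord ℋ) μ) μ) = leadExps ord I

/-- `ℋ` is a strong involutive basis of `I`: a weak one whose involutive cones are
pairwise disjoint and whose elements have pairwise distinct leading exponents. -/
def StrongInvBasis {R : Type} [CommRing R] {n : ℕ} (ord : LinearOrder (Fin n → ℕ))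
    (L : InvDiv n) (I : Set (SPoly R n)) (ℋ : Finset (SPoly R n)) : Prop :=
  WeakInvBasis ord L I ℋ ∧ Set.InjOn (lexp ord) (↑ℋ : Set (SPoly R n)) ∧
    ∀ μ ∈ leadSet ord ℋ, ∀ ν ∈ leadSet ord ℋ, μ ≠ ν →
      Disjoint (rcone (L.mult (leadSet ord ℋ) μ) μ) (rcone (L.mult (leadSet ord ℋ) ν) ν)

section Helpers
variable {K : Type} [Field K] {n : ℕ} {ord : LinearOrder (Fin n → ℕ)}

lemma lexp_zero : lexp ord (0 : SPoly K n) = 0 := by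
  simp [lexp]

lemma lexp_mem {f : SPoly K n} (hf : f ≠ 0) : lexp ord f ∈ f.support := by
  letI := ord
  obtain ⟨b, hb⟩ := Finset.max_of_nonempty (Finsupp.support_nonempty_iff.2 hf)
  have : lexp ord f = b := by rw [lexp, hb]; rfl
  rw [this]
  exact Finset.mem_of_max hb

lemma le_lexp {f : SPoly K n} {κ : Fin n → ℕ} (hκ : κ ∈ f.support) :
    ord.le κ (lexp ord f) := by
  letI := ord
  obtain ⟨b, hb⟩ := Finset.max_of_nonempty ⟨κ, hκ⟩
  have h1 := Finset.le_max hκ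
  rw [hb] at h1
  have : lexp ord f = b := by rw [lexp, hb]; rfl
  rw [this]
  exact_mod_cast h1

lemma lexp_le {f : SPoly K n} {b : Fin n → ℕ} (h0 : ord.le 0 b)
    (h : ∀ κ ∈ f.support, ord.le κ b) : ord.le (lexp ord f) b := by
  rcases eq_or_ne f 0 with rfl | hf
  · rw [lexp_zero]; exact h0
  · exact h _ (lexp_mem hf)

lemma apply_eq_zero_of_lt {f : SPoly K n} {κ : Fin n → ℕ}
    (h : ord.lt (lexp ord f) κ) : f κ = 0 := by
  letI := ord
  by_contra hne
  have h1 := le_lexp (ord := ord) (Finsupp.mem_support_iff.2 hne)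
  exact ((ord.lt_iff_le_not_ge _ _).1 h).2 h1

lemma lexp_single {μ : Fin n → ℕ} {c : K} (hc : c ≠ 0) :
    lexp ord (Finsupp.single μ c) = μ := by
  letI := ord
  rw [lexp, Finsupp.support_single_ne_zero _ hc]
  rfl

lemma lexp_sum {ι : Type*} {s : Finset ι} {g : ι → SPoly K n} {b : Fin n → ℕ} {i₀ : ι}
    (hi₀ : i₀ ∈ s)
    (hb : ∀ i ∈ s, ∀ κ ∈ (g i).support, ord.le κ b)
    (htop : (g i₀) b ≠ 0)
    (hothers : ∀ i ∈ s, i ≠ i₀ → (g i) b = 0) :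
    (∑ i ∈ s, g i) ≠ 0 ∧ lexp ord (∑ i ∈ s, g i) = b := by
  letI := ord
  have hcoeff : (∑ i ∈ s, g i) b = (g i₀) b := by
    rw [Finsupp.finset_sum_apply]
    exact Finset.sum_eq_single_of_mem i₀ hi₀ hothers
  have hmem : b ∈ (∑ i ∈ s, g i).support := by
    rw [Finsupp.mem_support_iff, hcoeff]; exact htop
  have hne : (∑ i ∈ s, g i) ≠ 0 := fun h => by simp [h] at hmem
  refine ⟨hne, ord.le_antisymm _ _ ?_ (le_lexp hmem)⟩
  obtain ⟨i, hi, hκi⟩ := Finsupp.mem_support_finset_sum _ (lexp_mem hne)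
  exact hb i hi _ hκi

lemma lexp_sum_le {ι : Type*} {s : Finset ι} {g : ι → SPoly K n} {b : Fin n → ℕ}
    (h0 : ord.le 0 b) (h : ∀ i ∈ s, ord.le (lexp ord (g i)) b) :
    ord.le (lexp ord (∑ i ∈ s, g i)) b := by
  letI := ord
  refine lexp_le h0 ?_
  intro κ hκ
  obtain ⟨i, hi, hκi⟩ := Finsupp.mem_support_finset_sum κ hκ
  exact ord.le_trans _ _ _ (le_lexp hκi) (h i hi)

end Helpers

section OrdArith
variable {K : Type} [Field K] {n : ℕ} {ord : LinearOrder (Fin n → ℕ)}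

lemma ord_lt_of_le_ne {a b : Fin n → ℕ} (h : ord.le a b) (hne : a ≠ b) : ord.lt a b := by
  rw [ord.lt_iff_le_not_ge]
  exact ⟨h, fun hba => hne (ord.le_antisymm _ _ h hba)⟩

lemma ord_le_of_lt {a b : Fin n → ℕ} (h : ord.lt a b) : ord.le a b :=
  ((ord.lt_iff_le_not_ge _ _).1 h).1

lemma ord_ne_of_lt {a b : Fin n → ℕ} (h : ord.lt a b) : a ≠ b := fun he => by
  subst he
  exact ((ord.lt_iff_le_not_ge _ _).1 h).2 (ord.le_refl a)

lemma ord_lt_of_le_of_lt {a b c : Fin n → ℕ} (h1 : ord.le a b) (h2 : ord.lt b c) :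
    ord.lt a c := by
  rw [ord.lt_iff_le_not_ge] at h2 ⊢
  exact ⟨ord.le_trans _ _ _ h1 h2.1, fun hca => h2.2 (ord.le_trans _ _ _ hca h1)⟩

lemma ord_lt_of_lt_of_le {a b c : Fin n → ℕ} (h1 : ord.lt a b) (h2 : ord.le b c) :
    ord.lt a c := by
  rw [ord.lt_iff_le_not_ge] at h1 ⊢
  exact ⟨ord.le_trans _ _ _ h1.1 h2, fun hca => h1.2 (ord.le_trans _ _ _ h2 hca)⟩

lemma ord_not_lt_self {a : Fin n → ℕ} (h : ord.lt a a) : False :=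
  ord_ne_of_lt h rfl

lemma ord_le_of_pointwise (A : SolvMul K n ord) {a b : Fin n → ℕ} (h : ∀ i, a i ≤ b i) : ord.le a b := by
  have hab : a + (b - a) = b := by funext i; have := h i; simp; omega
  rcases eq_or_ne (0 : Fin n → ℕ) (b - a) with h0 | h0
  · have : a = b := by rw [← hab, ← h0, add_zero]
    rw [this]; exact ord.le_refl b
  · have hlt := A.add_compat 0 (b - a) a (ord_lt_of_le_ne (A.zero_min _) h0)
    rw [zero_add] at hlt
    have : b - a + a = b := by funext i; have := h i; simp; omega
    rw [this] at hlt
    exact ord_le_of_lt hlt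

lemma ord_add_lt_right (A : SolvMul K n ord) {a b σ : Fin n → ℕ} (h : ord.lt a b) : ord.lt (σ + a) (σ + b) := by
  have := A.add_compat a b σ h
  rwa [add_comm a σ, add_comm b σ] at this

lemma ord_add_le_right (A : SolvMul K n ord) {a b σ : Fin n → ℕ} (h : ord.le a b) : ord.le (σ + a) (σ + b) := by
  rcases eq_or_ne a b with rfl | hne
  · exact ord.le_refl _
  · exact ord_le_of_lt (ord_add_lt_right A (ord_lt_of_le_ne h hne))

lemma ord_wf (A : SolvMul K n ord) : WellFounded ord.lt := by
  rw [RelEmbedding.wellFounded_iff_isEmpty]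
  constructor
  intro emb
  obtain ⟨m, k, hmk, hle⟩ :=
    (Set.isPWO_of_wellQuasiOrderedLE (Set.univ : Set (Fin n → ℕ))) (fun i => ⟨emb i, Set.mem_univ _⟩)
  have h1 : ord.le (emb m) (emb k) := ord_le_of_pointwise A (fun i => hle i)
  have h2 : ord.lt (emb k) (emb m) := emb.map_rel_iff.2 hmk
  exact ((ord.lt_iff_le_not_ge _ _).1 h2).2 h1


section StarBasics
variable {K : Type} [Field K] {n : ℕ} {ord : LinearOrder (Fin n → ℕ)}

lemma sp_zero_star (A : SolvMul K n ord) (f : SPoly K n) : A.star 0 f = 0 := by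
  have h := A.add_star 0 0 f
  rw [add_zero] at h
  exact left_eq_add.1 h

lemma sp_star_zero (A : SolvMul K n ord) (f : SPoly K n) : A.star f 0 = 0 := by
  have h := A.star_add f 0 0
  rw [add_zero] at h
  exact left_eq_add.1 h

lemma sp_neg_star (A : SolvMul K n ord) (f g : SPoly K n) :
    A.star (-f) g = -A.star f g := by
  have h := A.add_star f (-f) g
  rw [add_neg_cancel, sp_zero_star] at h
  exact (eq_neg_of_add_eq_zero_right h.symm)

lemma sp_sub_star (A : SolvMul K n ord) (f g h : SPoly K n) :
    A.star (f - g) h = A.star f h - A.star g h := by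
  rw [sub_eq_add_neg, A.add_star, sp_neg_star, sub_eq_add_neg]

lemma sp_sum_star (A : SolvMul K n ord) {ι : Type*} (s : Finset ι) (F : ι → SPoly K n)
    (g : SPoly K n) : A.star (∑ i ∈ s, F i) g = ∑ i ∈ s, A.star (F i) g := by
  classical
  induction s using Finset.induction_on with
  | empty => simp [sp_zero_star]
  | insert _ _ hnot ih =>
      rw [Finset.sum_insert hnot, A.add_star, ih, Finset.sum_insert hnot]

lemma sp_star_sum (A : SolvMul K n ord) {ι : Type*} (s : Finset ι) (f : SPoly K n)
    (G : ι → SPoly K n) : A.star f (∑ i ∈ s, G i) = ∑ i ∈ s, A.star f (G i) := by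
  classical
  induction s using Finset.induction_on with
  | empty => simp [sp_star_zero]
  | insert _ _ hnot ih =>
      rw [Finset.sum_insert hnot, A.star_add, ih, Finset.sum_insert hnot]

lemma sp_smul_star (A : SolvMul K n ord) (c : K) (f g : SPoly K n) :
    A.star (c • f) g = c • A.star f g := by
  rw [← A.scalar_star c f, A.star_assoc, A.scalar_star]

lemma sp_single_eq_smul (μ : Fin n → ℕ) (c : K) :
    Finsupp.single μ c = c • Finsupp.single μ (1 : K) := by
  rw [Finsupp.smul_single', mul_one]

lemma sp_decomp (f : SPoly K n) : f = ∑ μ ∈ f.support, Finsupp.single μ (f μ) :=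
  (Finsupp.sum_single f).symm

end StarBasics

section StarLexp
variable {K : Type} [Field K] {n : ℕ} {ord : LinearOrder (Fin n → ℕ)}

lemma ord_add_le (A : SolvMul K n ord) {a b σ : Fin n → ℕ} (h : ord.le a b) :
    ord.le (a + σ) (b + σ) := by
  rcases eq_or_ne a b with rfl | hne
  · exact ord.le_refl _
  · exact ord_le_of_lt (A.add_compat a b σ (ord_lt_of_le_ne h hne))

lemma sp_star_scalar (A : SolvMul K n ord) {f : SPoly K n} (hf : f ≠ 0) {d : K}
    (hd : d ≠ 0) :
    A.star f (Finsupp.single 0 d) ≠ 0 ∧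
      lexp ord (A.star f (Finsupp.single 0 d)) = lexp ord f := by
  have hq : ∀ μ : Fin n → ℕ,
      A.star (Finsupp.single μ 1) (Finsupp.single 0 d) ≠ 0 ∧
        lexp ord (A.star (Finsupp.single μ 1) (Finsupp.single 0 d)) = μ :=
    fun μ => A.mono_scalar μ d hd
  have hdecomp : A.star f (Finsupp.single 0 d) =
      ∑ μ ∈ f.support, (f μ) • A.star (Finsupp.single μ 1) (Finsupp.single 0 d) := by
    conv_lhs => rw [sp_decomp f]
    rw [sp_sum_star]
    exact Finset.sum_congr rfl fun μ _ => by rw [sp_single_eq_smul, sp_smul_star]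
  rw [hdecomp]
  refine lexp_sum (lexp_mem (ord := ord) hf) ?_ ?_ ?_
  · intro μ hμ κ hκ
    have hκ' := Finsupp.support_smul hκ
    exact ord.le_trans _ _ _ ((hq μ).2 ▸ le_lexp hκ') (le_lexp hμ)
  · rw [Finsupp.smul_apply, smul_eq_mul]
    refine mul_ne_zero (Finsupp.mem_support_iff.1 (lexp_mem (ord := ord) hf)) ?_
    have h := lexp_mem (ord := ord) (hq (lexp ord f)).1
    rw [(hq (lexp ord f)).2] at h
    exact Finsupp.mem_support_iff.1 h
  · intro μ hμ hne
    rw [Finsupp.smul_apply, smul_eq_mul]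
    have : A.star (Finsupp.single μ 1) (Finsupp.single 0 d) (lexp ord f) = 0 := by
      refine apply_eq_zero_of_lt (ord := ord) ?_
      rw [(hq μ).2]
      exact ord_lt_of_le_ne (le_lexp hμ) hne
    rw [this, mul_zero]

lemma sp_star_mono (A : SolvMul K n ord) {f : SPoly K n} (hf : f ≠ 0) (ν : Fin n → ℕ) :
    A.star f (Finsupp.single ν 1) ≠ 0 ∧
      lexp ord (A.star f (Finsupp.single ν 1)) = lexp ord f + ν := by
  have hq : ∀ μ : Fin n → ℕ,
      A.star (Finsupp.single μ 1) (Finsupp.single ν 1) ≠ 0 ∧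
        lexp ord (A.star (Finsupp.single μ 1) (Finsupp.single ν 1)) = μ + ν :=
    fun μ => A.mono_mono μ ν
  have hdecomp : A.star f (Finsupp.single ν 1) =
      ∑ μ ∈ f.support, (f μ) • A.star (Finsupp.single μ 1) (Finsupp.single ν 1) := by
    conv_lhs => rw [sp_decomp f]
    rw [sp_sum_star]
    exact Finset.sum_congr rfl fun μ _ => by rw [sp_single_eq_smul, sp_smul_star]
  rw [hdecomp]
  refine lexp_sum (lexp_mem (ord := ord) hf) ?_ ?_ ?_
  · intro μ hμ κ hκ
    have hκ' := Finsupp.support_smul hκ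
    refine ord.le_trans _ _ _ ((hq μ).2 ▸ le_lexp hκ') ?_
    exact ord_add_le A (le_lexp hμ)
  · rw [Finsupp.smul_apply, smul_eq_mul]
    refine mul_ne_zero (Finsupp.mem_support_iff.1 (lexp_mem (ord := ord) hf)) ?_
    have h := lexp_mem (ord := ord) (hq (lexp ord f)).1
    rw [(hq (lexp ord f)).2] at h
    exact Finsupp.mem_support_iff.1 h
  · intro μ hμ hne
    rw [Finsupp.smul_apply, smul_eq_mul]
    have : A.star (Finsupp.single μ 1) (Finsupp.single ν 1) (lexp ord f + ν) = 0 := by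
      refine apply_eq_zero_of_lt (ord := ord) ?_
      rw [(hq μ).2]
      exact A.add_compat μ (lexp ord f) ν (ord_lt_of_le_ne (le_lexp hμ) hne)
    rw [this, mul_zero]

lemma sp_star_lexp (A : SolvMul K n ord) {f g : SPoly K n} (hf : f ≠ 0) (hg : g ≠ 0) :
    A.star f g ≠ 0 ∧ lexp ord (A.star f g) = lexp ord f + lexp ord g := by
  have hdecomp : A.star f g = ∑ ν ∈ g.support,
      A.star (A.star f (Finsupp.single 0 (g ν))) (Finsupp.single ν 1) := by
    conv_lhs => rw [sp_decomp g]
    rw [sp_star_sum]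
    refine Finset.sum_congr rfl fun ν _ => ?_
    have h1 : Finsupp.single ν (g ν) =
        A.star (Finsupp.single 0 (g ν)) (Finsupp.single ν 1) := by
      rw [A.scalar_star, ← sp_single_eq_smul]
    rw [h1, ← A.star_assoc]
  have ht : ∀ ν ∈ g.support,
      A.star (A.star f (Finsupp.single 0 (g ν))) (Finsupp.single ν 1) ≠ 0 ∧
        lexp ord (A.star (A.star f (Finsupp.single 0 (g ν))) (Finsupp.single ν 1)) =
          lexp ord f + ν := by
    intro ν hν
    have hgν : g ν ≠ 0 := Finsupp.mem_support_iff.1 hν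
    obtain ⟨h1, h2⟩ := sp_star_scalar A hf hgν
    obtain ⟨h3, h4⟩ := sp_star_mono A h1 ν
    exact ⟨h3, by rw [h4, h2]⟩
  rw [hdecomp]
  refine lexp_sum (lexp_mem (ord := ord) hg) ?_ ?_ ?_
  · intro ν hν κ hκ
    refine ord.le_trans _ _ _ ((ht ν hν).2 ▸ le_lexp hκ) ?_
    exact ord_add_le_right A (le_lexp hν)
  · have h := lexp_mem (ord := ord) (ht _ (lexp_mem (ord := ord) hg)).1
    rw [(ht _ (lexp_mem (ord := ord) hg)).2] at h
    exact Finsupp.mem_support_iff.1 h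
  · intro ν hν hne
    refine apply_eq_zero_of_lt (ord := ord) ?_
    rw [(ht ν hν).2]
    exact ord_add_lt_right A (ord_lt_of_le_ne (le_lexp hν) hne)

end StarLexp
end OrdArith

section RepLemmas
variable {K : Type} [Field K] {n : ℕ} {ord : LinearOrder (Fin n → ℕ)}

lemma lexp_smul {c : K} (hc : c ≠ 0) (g : SPoly K n) :
    lexp ord (c • g) = lexp ord g := by
  rw [lexp, lexp, Finsupp.support_smul_eq hc]

lemma lexp_add_le (A : SolvMul K n ord) {a b : SPoly K n} {B : Fin n → ℕ}
    (ha : ord.le (lexp ord a) B) (hb : ord.le (lexp ord b) B) :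
    ord.le (lexp ord (a + b)) B := by
  classical
  refine lexp_le (A.zero_min B) ?_
  intro κ hκ
  rcases Finset.mem_union.1 (Finsupp.support_add hκ) with h | h
  · exact ord.le_trans _ _ _ (le_lexp h) ha
  · exact ord.le_trans _ _ _ (le_lexp h) hb

lemma zero_rep (A : SolvMul K n ord) (L : InvDiv n) (ℋ : Finset (SPoly K n)) :
    IsInvRep ord A L ℋ 0 (fun _ => 0) := by
  constructor
  · simp [sp_zero_star]
  · intro h
    refine ⟨by simp, ?_⟩
    rw [sp_zero_star]
    exact ord.le_refl _

open Classical in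
lemma core (A : SolvMul K n ord) (L : InvDiv n) {ℋ : Finset (SPoly K n)}
    (hH0 : (0 : SPoly K n) ∉ ℋ) {h₂ : SPoly K n} (hh₂ : h₂ ∈ ℋ) {σ : Fin n → ℕ}
    (hσ : ∀ i ∉ L.mult (leadSet ord ℋ) (lexp ord h₂), σ i = 0)
    {f : SPoly K n} (hf0 : f ≠ 0) (hlf : lexp ord f = σ + lexp ord h₂)
    {g : SPoly K n} (hg : g = A.star (Finsupp.single σ 1) h₂)
    {c : K} (hc : c = f (lexp ord f) / g (lexp ord f)) :
    g ≠ 0 ∧ lexp ord g = lexp ord f ∧ c ≠ 0 ∧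
      (f - c • g = 0 ∨ ord.lt (lexp ord (f - c • g)) (lexp ord f)) ∧
      ∀ P' : {h // h ∈ ℋ} → SPoly K n, IsInvRep ord A L ℋ (f - c • g) P' →
        IsInvRep ord A L ℋ f
          (fun h' => P' h' + if h' = ⟨h₂, hh₂⟩ then Finsupp.single σ c else 0) := by
  classical
  have hh₂0 : h₂ ≠ 0 := fun h => hH0 (h ▸ hh₂)
  have hs0 : (Finsupp.single σ (1 : K)) ≠ 0 := by
    simp [Finsupp.single_eq_zero]
  obtain ⟨hgne, hglex0⟩ := sp_star_lexp A hs0 hh₂0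
  have hglex : lexp ord g = lexp ord f := by
    rw [hg, hglex0, lexp_single (one_ne_zero), ← hlf]
  have hgne' : g ≠ 0 := hg ▸ hgne
  have hftop : f (lexp ord f) ≠ 0 := Finsupp.mem_support_iff.1 (lexp_mem hf0)
  have hgtop : g (lexp ord f) ≠ 0 := by
    rw [← hglex]
    exact Finsupp.mem_support_iff.1 (lexp_mem hgne')
  have hc0 : c ≠ 0 := by
    rw [hc]
    exact div_ne_zero hftop hgtop
  have hcoeff : (f - c • g) (lexp ord f) = 0 := by
    rw [Finsupp.sub_apply, Finsupp.smul_apply, smul_eq_mul, hc,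
      div_mul_cancel₀ _ hgtop, sub_self]
  -- all exponents of f - c•g are ≤ lexp f
  have hsupb : ∀ κ ∈ (f - c • g).support, ord.le κ (lexp ord f) := by
    intro κ hκ
    rcases Finset.mem_union.1 (Finsupp.support_sub hκ) with h | h
    · exact le_lexp h
    · have h' := Finsupp.support_smul h
      exact ord.le_trans _ _ _ (le_lexp h') (hglex ▸ ord.le_refl _)
  have hdec : f - c • g = 0 ∨ ord.lt (lexp ord (f - c • g)) (lexp ord f) := by
    rcases eq_or_ne (f - c • g) 0 with h | h
    · exact Or.inl h
    · refine Or.inr (ord_lt_of_le_ne (hsupb _ (lexp_mem h)) ?_)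
      intro he
      exact Finsupp.mem_support_iff.1 (lexp_mem (ord := ord) h) (he ▸ hcoeff)
  have hf'le : ord.le (lexp ord (f - c • g)) (lexp ord f) := by
    rcases hdec with h | h
    · rw [h, lexp_zero]; exact A.zero_min _
    · exact ord_le_of_lt h
  refine ⟨hgne', hglex, hc0, hdec, ?_⟩
  intro P' hP'
  have hstar_single : A.star (Finsupp.single σ c) h₂ = c • g := by
    rw [sp_single_eq_smul, sp_smul_star, hg]
  constructor
  · -- sum identity
    have : ∑ h' ∈ ℋ.attach,
        A.star (P' h' + if h' = ⟨h₂, hh₂⟩ then Finsupp.single σ c else 0) h'.1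
        = (∑ h' ∈ ℋ.attach, A.star (P' h') h'.1) +
          ∑ h' ∈ ℋ.attach,
            A.star (if h' = ⟨h₂, hh₂⟩ then Finsupp.single σ c else 0) h'.1 := by
      rw [← Finset.sum_add_distrib]
      exact Finset.sum_congr rfl fun h' _ => A.add_star _ _ _
    rw [this, ← hP'.1]
    have h2 : ∑ h' ∈ ℋ.attach,
        A.star (if h' = ⟨h₂, hh₂⟩ then Finsupp.single σ c else 0) h'.1 = c • g := by
      rw [Finset.sum_eq_single_of_mem (⟨h₂, hh₂⟩ : {h // h ∈ ℋ}) (Finset.mem_attach _ _)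
        (fun b _ hb => by rw [if_neg hb, sp_zero_star])]
      rw [if_pos rfl, hstar_single]
    rw [h2, sub_add_cancel]
  · intro h'
    beta_reduce
    constructor
    · intro μ hμ i hi
      rcases Finset.mem_union.1 (Finsupp.support_add hμ) with h | h
      · exact (hP'.2 h').1 μ h i hi
      · by_cases he : h' = ⟨h₂, hh₂⟩
        · rw [if_pos he] at h
          have hμσ : μ = σ := Finset.mem_singleton.1 (Finsupp.support_single_subset h)
          subst hμσ
          refine hσ i ?_
          have : h'.1 = h₂ := by rw [he]
          rwa [this] at hi
        · rw [if_neg he] at h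
          simp at h
    · by_cases he : h' = ⟨h₂, hh₂⟩
      · rw [if_pos he, A.add_star]
        refine lexp_add_le A (ord.le_trans _ _ _ (hP'.2 h').2 hf'le) ?_
        have h1 : h'.1 = h₂ := by rw [he]
        rw [h1, hstar_single, lexp_smul hc0, hglex]
        exact ord.le_refl _
      · rw [if_neg he, add_zero]
        exact ord.le_trans _ _ _ (hP'.2 h').2 hf'le

end RepLemmas

section MainWeak
variable {K : Type} [Field K] {n : ℕ} {ord : LinearOrder (Fin n → ℕ)}

lemma exists_rep (A : SolvMul K n ord) (L : InvDiv n) {I : Set (SPoly K n)}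
    {ℋ : Finset (SPoly K n)}
    (hIadd : ∀ f ∈ I, ∀ g ∈ I, f + g ∈ I)
    (hIneg : ∀ f ∈ I, -f ∈ I)
    (hImul : ∀ f ∈ I, ∀ p : SPoly K n, A.star p f ∈ I)
    (hW : WeakInvBasis ord L I ℋ) :
    ∀ f ∈ I, ∃ P, IsInvRep ord A L ℋ f P := by
  classical
  have hH0 : (0 : SPoly K n) ∉ ℋ := hW.2.1
  have hHI := hW.1
  have key : ∀ μ : Fin n → ℕ, ∀ f ∈ I, lexp ord f = μ → ∃ P, IsInvRep ord A L ℋ f P := by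
    intro μ0
    refine (ord_wf A).induction
      (C := fun μ => ∀ f ∈ I, lexp ord f = μ → ∃ P, IsInvRep ord A L ℋ f P) μ0 ?_
    intro μ ih f hf hlfμ
    rcases eq_or_ne f 0 with rfl | hf0
    · exact ⟨_, zero_rep A L ℋ⟩
    have hmem : lexp ord f ∈ leadExps ord I := ⟨f, hf, hf0, rfl⟩
    rw [← hW.2.2] at hmem
    obtain ⟨ν, hν, hcone⟩ := Set.mem_iUnion₂.1 hmem
    obtain ⟨h₂, hh₂, hlh⟩ := Finset.mem_image.1 hν
    set σ : Fin n → ℕ := fun i => lexp ord f i - ν i with hσdef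
    have hσ : ∀ i ∉ L.mult (leadSet ord ℋ) (lexp ord h₂), σ i = 0 := by
      intro i hi
      rw [hlh] at hi
      have := hcone.2 i hi
      simp [hσdef, this]
    have hlf' : lexp ord f = σ + lexp ord h₂ := by
      funext i
      have h1 := hcone.1 i
      have h2 : lexp ord h₂ i = ν i := by rw [hlh]
      simp only [Pi.add_apply, hσdef, h2]
      omega
    obtain ⟨hgne, hglex, hc0, hdec, hbuild⟩ :=
      core A L hH0 hh₂ hσ hf0 hlf' (g := A.star (Finsupp.single σ 1) h₂) rfl
        (c := f (lexp ord f) / (A.star (Finsupp.single σ 1) h₂) (lexp ord f)) rfl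
    set g := A.star (Finsupp.single σ 1) h₂ with hgdef
    set c := f (lexp ord f) / g (lexp ord f) with hcdef
    have hgI : g ∈ I := hImul h₂ (hHI hh₂) _
    have hf'I : f - c • g ∈ I := by
      have h1 : c • g ∈ I := by
        rw [← A.scalar_star]
        exact hImul g hgI _
      have h2 := hIadd f hf _ (hIneg _ h1)
      rwa [← sub_eq_add_neg] at h2
    rcases hdec with h0 | hlt
    · refine ⟨_, hbuild (fun _ => 0) ?_⟩
      rw [h0]
      exact zero_rep A L ℋ
    · obtain ⟨P', hP'⟩ := ih (lexp ord (f - c • g)) (hlfμ ▸ hlt) _ hf'I rfl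
      exact ⟨_, hbuild P' hP'⟩
  exact fun f hf => key (lexp ord f) f hf rfl

lemma cones_sub (A : SolvMul K n ord) (L : InvDiv n) {I : Set (SPoly K n)}
    {ℋ : Finset (SPoly K n)}
    (hHI : (↑ℋ : Set (SPoly K n)) ⊆ I) (hH0 : (0 : SPoly K n) ∉ ℋ)
    (hImul : ∀ f ∈ I, ∀ p : SPoly K n, A.star p f ∈ I) :
    (⋃ μ ∈ leadSet ord ℋ, rcone (L.mult (leadSet ord ℋ) μ) μ) ⊆ leadExps ord I := by
  intro μ hμ
  obtain ⟨ν, hν, hcone⟩ := Set.mem_iUnion₂.1 hμ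
  obtain ⟨h, hh, hlh⟩ := Finset.mem_image.1 hν
  set σ : Fin n → ℕ := fun i => μ i - ν i with hσdef
  have hσν : σ + lexp ord h = μ := by
    funext i
    have h1 := hcone.1 i
    have h2 : lexp ord h i = ν i := by rw [hlh]
    simp only [Pi.add_apply, hσdef, h2]
    omega
  have hne : h ≠ 0 := fun e => hH0 (e ▸ hh)
  have hs0 : (Finsupp.single σ (1 : K)) ≠ 0 := by simp [Finsupp.single_eq_zero]
  obtain ⟨hgne, hglex⟩ := sp_star_lexp A hs0 hne
  refine ⟨A.star (Finsupp.single σ 1) h, hImul h (hHI hh) _, hgne, ?_⟩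
  rw [hglex, lexp_single one_ne_zero, hσν]

lemma lead_sub_cones (A : SolvMul K n ord) (L : InvDiv n) {I : Set (SPoly K n)}
    {ℋ : Finset (SPoly K n)} (hH0 : (0 : SPoly K n) ∉ ℋ)
    (hrep : ∀ f ∈ I, ∃ P, IsInvRep ord A L ℋ f P) :
    leadExps ord I ⊆ ⋃ μ ∈ leadSet ord ℋ, rcone (L.mult (leadSet ord ℋ) μ) μ := by
  rintro μ ⟨f, hfI, hf0, rfl⟩
  obtain ⟨P, hP⟩ := hrep f hfI
  have hcoef : f (lexp ord f) ≠ 0 := Finsupp.mem_support_iff.1 (lexp_mem hf0)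
  have hex : ∃ H ∈ ℋ.attach, (A.star (P H) H.1) (lexp ord f) ≠ 0 := by
    by_contra hall
    push_neg at hall
    apply hcoef
    nth_rewrite 1 [hP.1]
    rw [Finsupp.finset_sum_apply]
    exact Finset.sum_eq_zero hall
  obtain ⟨H, _, hHne⟩ := hex
  have hne : A.star (P H) H.1 ≠ 0 := by
    intro e
    rw [e] at hHne
    simp at hHne
  have hle1 : ord.le (lexp ord f) (lexp ord (A.star (P H) H.1)) :=
    le_lexp (Finsupp.mem_support_iff.2 hHne)
  have heq : lexp ord (A.star (P H) H.1) = lexp ord f :=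
    ord.le_antisymm _ _ (hP.2 H).2 hle1
  have hPne : P H ≠ 0 := by
    intro e
    rw [e, sp_zero_star] at hne
    exact hne rfl
  have hH0' : H.1 ≠ 0 := fun e => hH0 (e ▸ H.2)
  obtain ⟨_, hlex⟩ := sp_star_lexp A hPne hH0'
  rw [heq] at hlex
  refine Set.mem_iUnion₂.2 ⟨lexp ord H.1, Finset.mem_image.2 ⟨H.1, H.2, rfl⟩, ?_, ?_⟩
  · intro i
    rw [hlex]
    simp
  · intro i hi
    rw [hlex]
    have h1 := (hP.2 H).1 (lexp ord (P H)) (lexp_mem hPne) i hi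
    simp [h1]

end MainWeak

section MainStrong
variable {K : Type} [Field K] {n : ℕ} {ord : LinearOrder (Fin n → ℕ)}

lemma lexp_neg (g : SPoly K n) : lexp ord (-g) = lexp ord g := by
  rw [lexp, lexp, Finsupp.support_neg]

open Classical in
lemma trivial_rep (A : SolvMul K n ord) (L : InvDiv n) {ℋ : Finset (SPoly K n)}
    {h₁ : SPoly K n} (hh₁ : h₁ ∈ ℋ) :
    IsInvRep ord A L ℋ h₁
      (fun h' => if h' = ⟨h₁, hh₁⟩ then Finsupp.single 0 1 else 0) := by
  constructor
  · symm
    rw [Finset.sum_eq_single_of_mem (⟨h₁, hh₁⟩ : {h // h ∈ ℋ}) (Finset.mem_attach _ _)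
      (fun b _ hb => by beta_reduce; rw [if_neg hb, sp_zero_star])]
    beta_reduce
    rw [if_pos rfl, A.one_star]
  · intro h'
    beta_reduce
    by_cases he : h' = ⟨h₁, hh₁⟩
    · rw [if_pos he]
      constructor
      · intro μ hμ i hi
        have h2 := Finset.mem_singleton.1 (Finsupp.support_single_subset hμ)
        subst h2
        rfl
      · have h1 : h'.1 = h₁ := by rw [he]
        rw [h1, A.one_star]
        exact ord.le_refl _
    · rw [if_neg he]
      constructor
      · intro μ hμ i hi
        simp at hμ
      · rw [sp_zero_star, lexp_zero]
        exact A.zero_min _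

open Classical in
lemma rep_nonzero_at (A : SolvMul K n ord) (L : InvDiv n) {I : Set (SPoly K n)}
    {ℋ : Finset (SPoly K n)}
    (hHI : (↑ℋ : Set (SPoly K n)) ⊆ I) (hH0 : (0 : SPoly K n) ∉ ℋ)
    (hIadd : ∀ f ∈ I, ∀ g ∈ I, f + g ∈ I)
    (hIneg : ∀ f ∈ I, -f ∈ I)
    (hImul : ∀ f ∈ I, ∀ p : SPoly K n, A.star p f ∈ I)
    (hex : ∀ f ∈ I, ∃ P, IsInvRep ord A L ℋ f P)
    {h₂ : SPoly K n} (hh₂ : h₂ ∈ ℋ) {σ : Fin n → ℕ}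
    (hσ : ∀ i ∉ L.mult (leadSet ord ℋ) (lexp ord h₂), σ i = 0)
    {f : SPoly K n} (hfI : f ∈ I) (hf0 : f ≠ 0)
    (hlf : lexp ord f = σ + lexp ord h₂) :
    ∃ P, IsInvRep ord A L ℋ f P ∧ P ⟨h₂, hh₂⟩ ≠ 0 := by
  obtain ⟨hgne, hglex, hc0, hdec, hbuild⟩ :=
    core A L hH0 hh₂ hσ hf0 hlf (g := A.star (Finsupp.single σ 1) h₂) rfl
      (c := f (lexp ord f) / (A.star (Finsupp.single σ 1) h₂) (lexp ord f)) rfl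
  set g := A.star (Finsupp.single σ 1) h₂ with hgdef
  set c := f (lexp ord f) / g (lexp ord f) with hcdef
  have hstar_single : A.star (Finsupp.single σ c) h₂ = c • g := by
    rw [sp_single_eq_smul, sp_smul_star]
  have hsc0 : Finsupp.single σ c ≠ 0 := by
    simp [Finsupp.single_eq_zero, hc0]
  rcases hdec with h0 | hlt
  · -- remainder is zero; use the zero representation
    refine ⟨_, hbuild (fun _ => 0) (by rw [h0]; exact zero_rep A L ℋ), ?_⟩
    beta_reduce
    rw [if_pos rfl, zero_add]
    exact hsc0
  · have hgI : g ∈ I := hImul h₂ (hHI hh₂) _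
    have hf'I : f - c • g ∈ I := by
      have h1 : c • g ∈ I := by
        rw [← A.scalar_star]
        exact hImul g hgI _
      have h2 := hIadd f hfI _ (hIneg _ h1)
      rwa [← sub_eq_add_neg] at h2
    obtain ⟨P', hP'⟩ := hex _ hf'I
    refine ⟨_, hbuild P' hP', ?_⟩
    beta_reduce
    rw [if_pos rfl]
    intro heq
    have hPeq : P' ⟨h₂, hh₂⟩ = -Finsupp.single σ c := eq_neg_of_add_eq_zero_left heq
    have h3 : A.star (P' ⟨h₂, hh₂⟩) h₂ = -(c • g) := by
      rw [hPeq, sp_neg_star, hstar_single]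
    have h4 := (hP'.2 ⟨h₂, hh₂⟩).2
    rw [h3] at h4
    rw [lexp_neg, lexp_smul hc0, hglex] at h4
    exact ord_not_lt_self (ord_lt_of_le_of_lt h4 hlt)

open Classical in
lemma rep_unique (A : SolvMul K n ord) (L : InvDiv n) {ℋ : Finset (SPoly K n)}
    (hH0 : (0 : SPoly K n) ∉ ℋ)
    (hinj : Set.InjOn (lexp ord) (↑ℋ : Set (SPoly K n)))
    (hdisj : ∀ μ ∈ leadSet ord ℋ, ∀ ν ∈ leadSet ord ℋ, μ ≠ ν →
      Disjoint (rcone (L.mult (leadSet ord ℋ) μ) μ) (rcone (L.mult (leadSet ord ℋ) ν) ν))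
    {f : SPoly K n} {P Q : {h // h ∈ ℋ} → SPoly K n}
    (hP : IsInvRep ord A L ℋ f P) (hQ : IsInvRep ord A L ℋ f Q) : P = Q := by
  by_contra hne
  have hD : ∃ H, P H - Q H ≠ 0 := by
    by_contra hall
    push_neg at hall
    apply hne
    funext H
    have h1 := hall H
    rwa [sub_eq_zero] at h1
  set D : {h // h ∈ ℋ} → SPoly K n := fun H => P H - Q H with hDdef
  have hsum : ∑ H ∈ ℋ.attach, A.star (D H) H.1 = 0 := by
    have h1 : ∀ H ∈ ℋ.attach, A.star (D H) H.1 =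
        A.star (P H) H.1 - A.star (Q H) H.1 := fun H _ => sp_sub_star A _ _ _
    rw [Finset.sum_congr rfl h1, Finset.sum_sub_distrib, ← hP.1, ← hQ.1, sub_self]
  have hDsupp : ∀ H : {h // h ∈ ℋ}, ∀ μ ∈ (D H).support,
      ∀ i ∉ L.mult (leadSet ord ℋ) (lexp ord H.1), μ i = 0 := by
    intro H μ hμ i hi
    rcases Finset.mem_union.1 (Finsupp.support_sub hμ) with h | h
    · exact (hP.2 H).1 μ h i hi
    · exact (hQ.2 H).1 μ h i hi
  set T := ℋ.attach.filter (fun H => D H ≠ 0) with hTdef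
  have hTne : T.Nonempty := hD.imp fun H hH =>
    Finset.mem_filter.2 ⟨Finset.mem_attach _ _, hH⟩
  letI := ord
  obtain ⟨Hm, hHmT, hmax⟩ :=
    Finset.exists_max_image T (fun H => lexp ord (A.star (D H) H.1)) hTne
  have hDHm : D Hm ≠ 0 := (Finset.mem_filter.1 hHmT).2
  have hH1 : ∀ H : {h // h ∈ ℋ}, (H : SPoly K n) ≠ 0 := fun H e => hH0 (e ▸ H.2)
  obtain ⟨hKne, hKlex⟩ := sp_star_lexp A hDHm (hH1 Hm)
  set κ := lexp ord (A.star (D Hm) Hm.1) with hκdef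
  have hconeH : ∀ H ∈ T, lexp ord (A.star (D H) H.1) = κ →
      κ ∈ rcone (L.mult (leadSet ord ℋ) (lexp ord H.1)) (lexp ord H.1) := by
    intro H hHT he
    have hDH : D H ≠ 0 := (Finset.mem_filter.1 hHT).2
    obtain ⟨_, hlex⟩ := sp_star_lexp A hDH (hH1 H)
    rw [he] at hlex
    constructor
    · intro i
      rw [hlex]
      simp
    · intro i hi
      rw [hlex]
      have h1 := hDsupp H _ (lexp_mem (ord := ord) hDH) i hi
      simp [h1]
  have hlt : ∀ H ∈ T, H ≠ Hm → ord.lt (lexp ord (A.star (D H) H.1)) κ := by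
    intro H hHT hne'
    refine ord_lt_of_le_ne (hmax H hHT) ?_
    intro he
    have hc1 := hconeH H hHT he
    have hc2 := hconeH Hm hHmT rfl
    by_cases hll : lexp ord (H.1) = lexp ord (Hm.1)
    · exact hne' (Subtype.ext (hinj (Finset.mem_coe.2 H.2) (Finset.mem_coe.2 Hm.2) hll))
    · have hd := hdisj _ (Finset.mem_image.2 ⟨H.1, H.2, rfl⟩)
        _ (Finset.mem_image.2 ⟨Hm.1, Hm.2, rfl⟩) hll
      exact Set.disjoint_left.1 hd hc1 hc2
  have hval : (∑ H ∈ ℋ.attach, A.star (D H) H.1) κ = (A.star (D Hm) Hm.1) κ := by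
    rw [Finsupp.finset_sum_apply]
    refine Finset.sum_eq_single_of_mem Hm (Finset.mem_attach _ _) ?_
    intro H _ hne'
    by_cases hHT : H ∈ T
    · exact apply_eq_zero_of_lt (ord := ord) (hlt H hHT hne')
    · have hD0 : D H = 0 := by
        by_contra hD0
        exact hHT (Finset.mem_filter.2 ⟨Finset.mem_attach _ _, hD0⟩)
      rw [hD0, sp_zero_star]
      rfl
  rw [hsum] at hval
  exact Finsupp.mem_support_iff.1 (lexp_mem hKne) hval.symm

end MainStrong

section Assemble
variable {K : Type} [Field K] {n : ℕ} {ord : LinearOrder (Fin n → ℕ)}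

open Classical in
lemma strong_of_unique (A : SolvMul K n ord) (L : InvDiv n) {I : Set (SPoly K n)}
    {ℋ : Finset (SPoly K n)}
    (hHI : (↑ℋ : Set (SPoly K n)) ⊆ I) (hH0 : (0 : SPoly K n) ∉ ℋ)
    (hIadd : ∀ f ∈ I, ∀ g ∈ I, f + g ∈ I)
    (hIneg : ∀ f ∈ I, -f ∈ I)
    (hImul : ∀ f ∈ I, ∀ p : SPoly K n, A.star p f ∈ I)
    (huniq : ∀ f ∈ I, ∃! P, IsInvRep ord A L ℋ f P) :
    Set.InjOn (lexp ord) (↑ℋ : Set (SPoly K n)) ∧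
      ∀ μ ∈ leadSet ord ℋ, ∀ ν ∈ leadSet ord ℋ, μ ≠ ν →
        Disjoint (rcone (L.mult (leadSet ord ℋ) μ) μ)
          (rcone (L.mult (leadSet ord ℋ) ν) ν) := by
  have hex : ∀ f ∈ I, ∃ P, IsInvRep ord A L ℋ f P := fun f hf => (huniq f hf).exists
  -- key contradiction builder
  have key : ∀ h₁ ∈ ℋ, ∀ h₂ ∈ ℋ, h₁ ≠ h₂ → ∀ σ : Fin n → ℕ,
      (∀ i ∉ L.mult (leadSet ord ℋ) (lexp ord h₂), σ i = 0) →
      lexp ord h₁ = σ + lexp ord h₂ → False := by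
    intro h₁ hh₁ h₂ hh₂ hne σ hσ hlf
    have hf0 : h₁ ≠ 0 := fun e => hH0 (e ▸ hh₁)
    obtain ⟨P, hP, hPne⟩ :=
      rep_nonzero_at A L hHI hH0 hIadd hIneg hImul hex hh₂ hσ (hHI hh₁) hf0 hlf
    obtain ⟨R, _, hu⟩ := huniq h₁ (hHI hh₁)
    have e1 := hu P hP
    have e2 := hu _ (trivial_rep A L hh₁)
    have e3 : P = fun h' => if h' = ⟨h₁, hh₁⟩ then Finsupp.single 0 (1:K) else 0 :=
      e1.trans e2.symm
    apply hPne
    rw [e3]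
    beta_reduce
    rw [if_neg]
    intro he
    exact hne (congrArg Subtype.val he).symm
  constructor
  · intro h₁ hh₁ h₂ hh₂ hll
    by_contra hne
    refine key h₁ hh₁ h₂ hh₂ hne 0 (fun i _ => rfl) ?_
    rw [zero_add, hll]
  · have aux : ∀ μ ∈ leadSet ord ℋ, ∀ ν ∈ leadSet ord ℋ, μ ≠ ν →
        rcone (L.mult (leadSet ord ℋ) μ) μ ⊆ rcone (L.mult (leadSet ord ℋ) ν) ν →
        False := by
      intro μ hμ ν hν hne hsub
      have hμν : μ ∈ rcone (L.mult (leadSet ord ℋ) ν) ν :=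
        hsub ⟨fun i => le_refl _, fun i _ => rfl⟩
      obtain ⟨h₁, hh₁, hlh₁⟩ := Finset.mem_image.1 hμ
      obtain ⟨h₂, hh₂, hlh₂⟩ := Finset.mem_image.1 hν
      have hne12 : h₁ ≠ h₂ := fun e => hne (by rw [← hlh₁, ← hlh₂, e])
      refine key h₁ hh₁ h₂ hh₂ hne12 (fun i => μ i - ν i) ?_ ?_
      · intro i hi
        rw [hlh₂] at hi
        have h1 := hμν.2 i hi
        simp [h1]
      · funext i
        have h1 := hμν.1 i
        have h2 : lexp ord h₂ i = ν i := by rw [hlh₂]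
        have h3 : lexp ord h₁ i = μ i := by rw [hlh₁]
        simp only [Pi.add_apply, h2, h3]
        omega
    intro μ hμ ν hν hne
    by_contra hnd
    obtain ⟨κ, hκ1, hκ2⟩ := Set.not_disjoint_iff.1 hnd
    rcases L.nested (leadSet ord ℋ) μ hμ ν hν ⟨κ, hκ1, hκ2⟩ with h | h
    · exact aux μ hμ ν hν hne h
    · exact aux ν hν μ hμ hne.symm h

end Assemble

/-- Characterisation of weak and strong involutive bases by involutive standard
representations: a finite set `ℋ ⊂ I \ {0}` is a weak involutive basis of the nonzero
left ideal `I` iff every `f ∈ I` possesses an involutive standard representation with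
respect to `ℋ`, and a strong involutive basis iff this representation is always
unique. -/
theorem stmt14 {K : Type} [Field K] {n : ℕ} (ord : LinearOrder (Fin n → ℕ))
    (A : SolvMul K n ord) (L : InvDiv n) (I : Set (SPoly K n))
    (hI0 : (0 : SPoly K n) ∈ I)
    (hIadd : ∀ f ∈ I, ∀ g ∈ I, f + g ∈ I)
    (hIneg : ∀ f ∈ I, -f ∈ I)
    (hImul : ∀ f ∈ I, ∀ p : SPoly K n, A.star p f ∈ I)
    (hInz : I ≠ {0})
    (ℋ : Finset (SPoly K n)) (hHI : (↑ℋ : Set (SPoly K n)) ⊆ I)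
    (hH0 : (0 : SPoly K n) ∉ ℋ) :
    (WeakInvBasis ord L I ℋ ↔ ∀ f ∈ I, ∃ P, IsInvRep ord A L ℋ f P) ∧
    (StrongInvBasis ord L I ℋ ↔ ∀ f ∈ I, ∃! P, IsInvRep ord A L ℋ f P) := by
  constructor
  · constructor
    · intro hW
      exact exists_rep A L hIadd hIneg hImul hW
    · intro hrep
      exact ⟨hHI, hH0, Set.Subset.antisymm (cones_sub A L hHI hH0 hImul)
        (lead_sub_cones A L hH0 hrep)⟩
  · constructor
    · intro hS
      have hex := exists_rep A L hIadd hIneg hImul hS.1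
      intro f hf
      obtain ⟨P, hP⟩ := hex f hf
      exact ⟨P, hP, fun Q hQ => rep_unique A L hH0 hS.2.1 hS.2.2 hQ hP⟩
    · intro huniq
      have hrep : ∀ f ∈ I, ∃ P, IsInvRep ord A L ℋ f P := fun f hf => (huniq f hf).exists
      have hW : WeakInvBasis ord L I ℋ :=
        ⟨hHI, hH0, Set.Subset.antisymm (cones_sub A L hHI hH0 hImul)
          (lead_sub_cones A L hH0 hrep)⟩
      obtain ⟨hinj, hdisj⟩ := strong_of_unique A L hHI hH0 hIadd hIneg hImul huniq
      exact ⟨hW, hinj, hdisj⟩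
end
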